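/- Let A be a Zinbiel algebra over a field of characteristic zero, let x ∈ A, and define e_1 = x and e_{k+1} = x∘e_k for k ≥ 1. Then e_i∘e_j = C(i+j−1, j)·e_{i+j} for all i, j ≥ 1; in particular e_i∘e_1 = i·e_{i+1} for all i ≥ 1. -/
import Mathlib


/-- A bilinear multiplication `mul` is a *Zinbiel* multiplication if it satisfies
`(x∘y)∘z = x∘(y∘z) + x∘(z∘y)`. -/
def IsZinbiel {K A : Type*} [CommRing K] [AddCommGroup A] [Module K A]
    (mul : A →ₗ[K] A →ₗ[K] A) : Prop :=
  ∀ x y z : A, mul (mul x y) z = mul x (mul y z) + mul x (mul z y)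

/-- The descending series of a (Zinbiel) algebra: `zpow mul i` is `A^i`,
with `A^1 = A` and `A^{k+1} = A ∘ A^k` (we also set `A^0 = A` for convenience). -/
def zpow {K A : Type*} [CommRing K] [AddCommGroup A] [Module K A]
    (mul : A →ₗ[K] A →ₗ[K] A) : ℕ → Submodule K A
  | 0 => ⊤
  | 1 => ⊤
  | (k+2) => Submodule.span K {z | ∃ a : A, ∃ b ∈ zpow mul (k+1), z = mul a b}

/-- The bilinear multiplication on `Fin n → ℂ` determined by structure constants `c`:
`e_i ∘ e_j = ∑ k, c i j k • e_k`. -/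
noncomputable def mulOf (n : ℕ) (c : Fin n → Fin n → Fin n → ℂ) :
    (Fin n → ℂ) →ₗ[ℂ] (Fin n → ℂ) →ₗ[ℂ] (Fin n → ℂ) :=
  LinearMap.mk₂ ℂ (fun x y k => ∑ i, ∑ j, x i * y j * c i j k)
    (fun x x' y => by
      funext k
      simp [add_mul, Finset.sum_add_distrib])
    (fun a x y => by
      funext k
      simp [Finset.mul_sum, mul_assoc])
    (fun x y y' => by
      funext k
      simp [mul_add, add_mul, Finset.sum_add_distrib])
    (fun a x y => by
      funext k
      simp [Finset.mul_sum, mul_assoc, mul_left_comm])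

/-- Two bilinear multiplications give isomorphic algebras if there is a linear
equivalence intertwining them. -/
def Isom {A B : Type*} [AddCommGroup A] [Module ℂ A] [AddCommGroup B] [Module ℂ B]
    (mulA : A →ₗ[ℂ] A →ₗ[ℂ] A) (mulB : B →ₗ[ℂ] B →ₗ[ℂ] B) : Prop :=
  ∃ f : A ≃ₗ[ℂ] B, ∀ x y : A, f (mulA x y) = mulB (f x) (f y)

/-- Structure constants of the nul-filiform algebra `NF_n`:
`e_i ∘ e_j = C(i+j-1, j) e_{i+j}` for `2 ≤ i+j ≤ n` (1-indexed). -/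
noncomputable def NFc (n : ℕ) : Fin n → Fin n → Fin n → ℂ := fun i j k =>
  if (i : ℕ) + j + 1 = (k : ℕ) then (((i : ℕ) + j + 1).choose ((j : ℕ) + 1) : ℂ) else 0

/-- The nul-filiform Zinbiel algebra `NF_n` (as a multiplication on `Fin n → ℂ`). -/
noncomputable def NFmul (n : ℕ) : (Fin n → ℂ) →ₗ[ℂ] (Fin n → ℂ) →ₗ[ℂ] (Fin n → ℂ) :=
  mulOf n (NFc n)

/-- In a Zinbiel algebra over a field of characteristic zero, the
right-normed powers `e_1 = x`, `e_{k+1} = x ∘ e_k` satisfy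
`e_i ∘ e_j = C(i+j-1, j) • e_{i+j}`; in particular `e_i ∘ e_1 = i • e_{i+1}`. -/
theorem zinbiel_powers_mul {K : Type*} [Field K] [CharZero K]
    {A : Type*} [AddCommGroup A] [Module K A]
    (mul : A →ₗ[K] A →ₗ[K] A) (hzin : IsZinbiel mul) (x : A)
    (e : ℕ → A) (h1 : e 1 = x) (hrec : ∀ k : ℕ, 1 ≤ k → e (k + 1) = mul x (e k)) :
    (∀ i j : ℕ, 1 ≤ i → 1 ≤ j →
        mul (e i) (e j) = (((i + j - 1).choose j : ℕ) : K) • e (i + j)) ∧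
    (∀ i : ℕ, 1 ≤ i → mul (e i) (e 1) = (i : K) • e (i + 1)) := by
  have key : ∀ n i j : ℕ, 1 ≤ i → 1 ≤ j → i + j = n →
      mul (e i) (e j) = (((i + j - 1).choose j : ℕ) : K) • e (i + j) := by
    intro n
    induction n using Nat.strong_induction_on with
    | _ n ih =>
      intro i j hi hj hn
      match i, hi with
      | 1, _ =>
        have hm : mul (e 1) (e j) = e (j + 1) := by rw [h1, ← hrec j hj]
        rw [hm, show (1 : ℕ) + j - 1 = j by omega, show (1 : ℕ) + j = j + 1 by omega]
        simp
      | (m+2), _ =>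
        have h2 : e (m+2) = mul x (e (m+1)) := hrec (m+1) (by omega)
        have ih1 := ih (m+1+j) (by omega) (m+1) j (by omega) hj rfl
        have ih2 := ih (j+(m+1)) (by omega) j (m+1) hj (by omega) rfl
        have hx1 : mul x (e (m+1+j)) = e (m+1+j+1) := (hrec (m+1+j) (by omega)).symm
        have hx2 : mul x (e (j+(m+1))) = e (j+(m+1)+1) := (hrec _ (by omega)).symm
        rw [h2, hzin, ih1, ih2, map_smul, map_smul, hx1, hx2,
          show j+(m+1)+1 = m+1+j+1 by omega, ← add_smul,
          show m+2+j = m+1+j+1 by omega]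
        congr 1
        have hnat : (m+1+j-1).choose j + (j+(m+1)-1).choose (m+1)
            = (m+1+j+1-1).choose j := by
          rw [show m+1+j-1 = m+j by omega, show j+(m+1)-1 = m+j by omega,
            show m+1+j+1-1 = m+j+1 by omega]
          obtain ⟨t, rfl⟩ : ∃ t, j = t + 1 := ⟨j - 1, by omega⟩
          have hs : (m+(t+1)).choose (m+1) = (m+(t+1)).choose t := by
            rw [← Nat.choose_symm (show m+1 ≤ m+(t+1) by omega)]
            congr 1; omega
          rw [hs, show m+(t+1)+1 = (m+(t+1))+1 by omega,
            Nat.choose_succ_succ (m+(t+1)) t]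
          simp only [Nat.succ_eq_add_one]
          omega
        rw [← hnat]
        push_cast
        ring
  refine ⟨fun i j hi hj => key (i+j) i j hi hj rfl, fun i hi => ?_⟩
  have h := key (i+1) i 1 hi le_rfl rfl
  simpa using h
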